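/- Consider n = m = 2, f₁(x) = (x₁ − 1)², f₂(x) = x₂², the mixing matrix W = (1/2)·[[1,1],[1,1]], and the direction d = (1,1)ᵀ. Let {β_k}_{k∈ℕ} be any sequence of positive reals with β_k → 0, and define x₁^{(k)} := (β_k, 1 + β_k)ᵀ and x₂^{(k)} := (−β_k, 1 − β_k)ᵀ. Then: (i) these iterates satisfy the consensus-plus-step recursion x₁^{(k+1)} = (1/2)(x₁^{(k)} + x₂^{(k)}) + β_{k+1} d and x₂^{(k+1)} = (1/2)(x₁^{(k)} + x₂^{(k)}) − β_{k+1} d; (ii) the average iterate (1/2)(x₁^{(k)} + x₂^{(k)}) equals (0,1)ᵀ for every k; (iii) both sequences converge to (0,1)ᵀ, so ‖x₁^{(k)} − x₂^{(k)}‖ → 0 (consensus is reached); and (iv) the common limit (0,1)ᵀ is not a stationary point of f₁ + f₂, since ∇(f₁+f₂)(0,1) = (−2, 2)ᵀ ≠ 0. -/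

import Mathlib

open Filter

/-- the two-agent counterexample for `DDS-F`. With `f₁(x) = (x₁ - 1)²`,
`f₂(x) = x₂²`, `W = (1/2)[[1,1],[1,1]]`, `d = (1,1)ᵀ`, positive `β_k → 0`, and iterates
`x₁^{(k)} = (β_k, 1 + β_k)ᵀ`, `x₂^{(k)} = (-β_k, 1 - β_k)ᵀ`: (i) the iterates satisfy the
consensus-plus-step recursion; (ii) the average iterate is constantly `(0,1)ᵀ`;
(iii) both sequences converge to `(0,1)ᵀ` and consensus is reached; (iv) the common
limit `(0,1)ᵀ` is not stationary for `f₁ + f₂`, since `∇(f₁+f₂)(0,1) = (-2,2)ᵀ ≠ 0`. -/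
theorem ddsF_consensus_without_optimality
    (f₁ f₂ : EuclideanSpace ℝ (Fin 2) → ℝ)
    (hf₁ : f₁ = fun x => (x 0 - 1) ^ 2) (hf₂ : f₂ = fun x => (x 1) ^ 2)
    (β : ℕ → ℝ) (hβpos : ∀ k, 0 < β k) (hβ : Tendsto β atTop (nhds 0))
    (x₁ x₂ : ℕ → EuclideanSpace ℝ (Fin 2))
    (hx₁ : ∀ k, x₁ k = (WithLp.equiv 2 (Fin 2 → ℝ)).symm ![β k, 1 + β k])
    (hx₂ : ∀ k, x₂ k = (WithLp.equiv 2 (Fin 2 → ℝ)).symm ![-β k, 1 - β k]) :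
    -- (i) the consensus-plus-step recursion of DDS-F with mixing matrix (1/2)[[1,1],[1,1]]
    (∀ k, x₁ (k + 1)
        = (1 / 2 : ℝ) • (x₁ k + x₂ k)
          + β (k + 1) • (WithLp.equiv 2 (Fin 2 → ℝ)).symm ![1, 1] ∧
      x₂ (k + 1)
        = (1 / 2 : ℝ) • (x₁ k + x₂ k)
          - β (k + 1) • (WithLp.equiv 2 (Fin 2 → ℝ)).symm ![1, 1]) ∧
    -- (ii) the average iterate is constant, equal to (0, 1)ᵀ
    (∀ k, (1 / 2 : ℝ) • (x₁ k + x₂ k) = (WithLp.equiv 2 (Fin 2 → ℝ)).symm ![0, 1]) ∧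
    -- (iii) convergence of both agents to (0, 1)ᵀ and asymptotic consensus
    (Tendsto x₁ atTop (nhds ((WithLp.equiv 2 (Fin 2 → ℝ)).symm ![0, 1])) ∧
      Tendsto x₂ atTop (nhds ((WithLp.equiv 2 (Fin 2 → ℝ)).symm ![0, 1])) ∧
      Tendsto (fun k => ‖x₁ k - x₂ k‖) atTop (nhds 0)) ∧
    -- (iv) the common limit is not a stationary point of f₁ + f₂
    (gradient (fun x => f₁ x + f₂ x) ((WithLp.equiv 2 (Fin 2 → ℝ)).symm ![0, 1])
        = (WithLp.equiv 2 (Fin 2 → ℝ)).symm ![-2, 2] ∧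
      (WithLp.equiv 2 (Fin 2 → ℝ)).symm ![(-2 : ℝ), 2] ≠ 0) := by
  subst hf₁ hf₂
  set c : EuclideanSpace ℝ (Fin 2) := (WithLp.equiv 2 (Fin 2 → ℝ)).symm ![0, 1] with hc
  set d : EuclideanSpace ℝ (Fin 2) := (WithLp.equiv 2 (Fin 2 → ℝ)).symm ![1, 1] with hd
  refine ⟨?_, ?_, ⟨?_, ?_, ?_⟩, ?_, ?_⟩
  · intro k
    constructor
    · ext i
      fin_cases i <;>
        simp [hx₁, hx₂, hd, PiLp.add_apply, PiLp.smul_apply, WithLp.equiv_symm_apply, PiLp.toLp_apply] <;>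
        ring
    · ext i
      fin_cases i <;>
        simp [hx₁, hx₂, hd, PiLp.sub_apply, PiLp.add_apply, PiLp.smul_apply,
          WithLp.equiv_symm_apply, PiLp.toLp_apply] <;>
        ring
  · intro k
    ext i
    fin_cases i <;>
      simp [hx₁, hx₂, hc, PiLp.add_apply, PiLp.smul_apply, WithLp.equiv_symm_apply, PiLp.toLp_apply] <;>
      ring
  · have h : x₁ = fun k => c + β k • d := by
      funext k
      ext i
      fin_cases i <;>
        simp [hx₁, hc, hd, PiLp.add_apply, PiLp.smul_apply, WithLp.equiv_symm_apply, PiLp.toLp_apply]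
    rw [h]
    simpa using tendsto_const_nhds.add (hβ.smul_const d)
  · have h : x₂ = fun k => c + (-β k) • d := by
      funext k
      ext i
      fin_cases i <;>
        simp [hx₂, hc, hd, PiLp.add_apply, PiLp.smul_apply, WithLp.equiv_symm_apply, PiLp.toLp_apply] <;>
        ring
    rw [h]
    simpa using tendsto_const_nhds.add ((hβ.neg.smul_const d))
  · have h1 : Tendsto x₁ atTop (nhds c) := by
      have h : x₁ = fun k => c + β k • d := by
        funext k
        ext i
        fin_cases i <;>
          simp [hx₁, hc, hd, PiLp.add_apply, PiLp.smul_apply, WithLp.equiv_symm_apply, PiLp.toLp_apply]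
      rw [h]
      simpa using tendsto_const_nhds.add (hβ.smul_const d)
    have h2 : Tendsto x₂ atTop (nhds c) := by
      have h : x₂ = fun k => c + (-β k) • d := by
        funext k
        ext i
        fin_cases i <;>
          simp [hx₂, hc, hd, PiLp.add_apply, PiLp.smul_apply, WithLp.equiv_symm_apply, PiLp.toLp_apply] <;>
          ring
      rw [h]
      simpa using tendsto_const_nhds.add ((hβ.neg.smul_const d))
    simpa using (h1.sub h2).norm
  · have p0 : HasFDerivAt (𝕜 := ℝ)
        (⇑(EuclideanSpace.proj (0 : Fin 2) : EuclideanSpace ℝ (Fin 2) →L[ℝ] ℝ))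
        (EuclideanSpace.proj (0 : Fin 2)) c := ContinuousLinearMap.hasFDerivAt _
    have p1 : HasFDerivAt (𝕜 := ℝ)
        (⇑(EuclideanSpace.proj (1 : Fin 2) : EuclideanSpace ℝ (Fin 2) →L[ℝ] ℝ))
        (EuclideanSpace.proj (1 : Fin 2)) c := ContinuousLinearMap.hasFDerivAt _
    have h0 : HasDerivAt (fun t : ℝ => (t - 1) ^ 2) (2 * (c 0 - 1)) (c 0) := by
      simpa using ((hasDerivAt_id (c 0)).sub_const 1).fun_pow 2
    have h1 : HasDerivAt (fun t : ℝ => t ^ 2) (2 * c 1) (c 1) := by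
      simpa using (hasDerivAt_id (c 1)).fun_pow 2
    have q := (h0.comp_hasFDerivAt c p0).add (h1.comp_hasFDerivAt c p1)
    have hEq : (InnerProductSpace.toDual ℝ (EuclideanSpace ℝ (Fin 2)))
        ((WithLp.equiv 2 (Fin 2 → ℝ)).symm ![-2, 2])
        = (2 * (c 0 - 1)) • (EuclideanSpace.proj (0 : Fin 2))
          + (2 * c 1) • (EuclideanSpace.proj (1 : Fin 2)) := by
      ext y
      simp [hc, WithLp.equiv_symm_apply, PiLp.toLp_apply, PiLp.inner_apply, Fin.sum_univ_two,
        RCLike.inner_apply]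
      ring
    have q' : HasGradientAt (fun x : EuclideanSpace ℝ (Fin 2) => (x 0 - 1) ^ 2 + (x 1) ^ 2)
        ((WithLp.equiv 2 (Fin 2 → ℝ)).symm ![-2, 2]) c := by
      rw [hasGradientAt_iff_hasFDerivAt, hEq]
      exact q
    exact q'.gradient
  · intro h
    have := congrFun (congrArg (WithLp.equiv 2 (Fin 2 → ℝ)) h) 0
    simp [WithLp.equiv_symm_apply, PiLp.toLp_apply] at this
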